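/- Let r ≥ 2 be an integer and suppose q = r² and a = r (the case a = √q, Frobenius angle θ = π/3). Then for every positive integer X: M(X) = r^X if X ≡ 0 (mod 6); M(X) = r^{X−1} if X ≡ 1 (mod 6); M(X) = −r^X + r^{X−1} if X ≡ 2 (mod 6); M(X) = −r^X if X ≡ 3 (mod 6); M(X) = −r^{X−1} if X ≡ 4 (mod 6); M(X) = r^X − r^{X−1} if X ≡ 5 (mod 6). Consequently |M(X)| ≤ q^{X/2} for all X ≥ 1, with equality if and only if X ≡ 0 (mod 3). -/
import Mathlib


open Real Filter

/-- The coefficient sequence `c_N` with `c_0 = 1`, `c_1 = a - q - 1`,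
`c_2 = a*c_1 - q*c_0 + q`, and `c_N = a*c_{N-1} - q*c_{N-2}` for `N ≥ 3`;
these are the Taylor coefficients at `u = 0` of `(1-u)(1-qu)/(1-au+qu²)`,
the reciprocal of the zeta function of an elliptic curve over `F_q` with
Frobenius trace `a`. -/
def mertC (q a : ℤ) : ℕ → ℤ
  | 0 => 1
  | 1 => a - q - 1
  | 2 => a * (a - q - 1) - q * 1 + q
  | (N + 3) => a * mertC q a (N + 2) - q * mertC q a (N + 1)

/-- `M(X) = ∑_{N=0}^{X-1} c_N`, the Mertens summatory function of the
Möbius function of an elliptic curve over `F_q` with Frobenius trace `a`. -/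
def mertM (q a : ℤ) (X : ℕ) : ℤ := ∑ N ∈ Finset.range X, mertC q a N

def sval (r : ℤ) (k : ℕ) : ℤ :=
  if k = 1 ∨ k = 2 then r - r^2 - 1 else if k = 4 ∨ k = 5 then r^2 + 1 - r else 0

def tval (r : ℤ) (k : ℕ) : ℤ :=
  if k = 0 then r else if k = 1 then 1 else if k = 2 then 1 - r
  else if k = 3 then -r else if k = 4 then -1 else r - 1

lemma c_eq (r : ℤ) : ∀ N : ℕ, mertC (r^2) r (N+1) = r^N * sval r ((N+1) % 6) := by
  intro N
  induction N using Nat.strong_induction_on with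
  | _ N ih =>
    match N with
    | 0 => simp [mertC, sval]
    | 1 =>
      show mertC (r^2) r 2 = _
      simp only [mertC, sval]
      norm_num
      try ring
    | (N+2) =>
      have hrec : mertC (r^2) r (N+3) = r * mertC (r^2) r (N+2) - r^2 * mertC (r^2) r (N+1) := rfl
      rw [show N+2+1 = N+3 from rfl, hrec, ih (N+1) (by omega), ih N (by omega)]
      have key : sval r ((N+3)%6) = sval r ((N+2)%6) - sval r ((N+1)%6) := by
        have h6 : N % 6 = 0 ∨ N % 6 = 1 ∨ N % 6 = 2 ∨ N % 6 = 3 ∨ N % 6 = 4 ∨ N % 6 = 5 := by omega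
        rcases h6 with h|h|h|h|h|h <;>
          rw [show (N+1)%6 = (N%6+1)%6 from by omega, show (N+2)%6 = (N%6+2)%6 from by omega,
              show (N+3)%6 = (N%6+3)%6 from by omega, h] <;> simp [sval] <;> ring
      rw [key]; ring

lemma m_eq (r : ℤ) : ∀ X : ℕ, mertM (r^2) r (X+1) = r^X * tval r ((X+1) % 6) := by
  intro X
  induction X with
  | zero => simp [mertM, mertC, tval]
  | succ X ih =>
    have : mertM (r^2) r (X+2) = mertM (r^2) r (X+1) + mertC (r^2) r (X+1) := by
      simp [mertM, Finset.sum_range_succ]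
    rw [this, ih, c_eq]
    have key : tval r ((X+1)%6) + sval r ((X+1)%6) = r * tval r ((X+2)%6) := by
      have h6 : X % 6 = 0 ∨ X % 6 = 1 ∨ X % 6 = 2 ∨ X % 6 = 3 ∨ X % 6 = 4 ∨ X % 6 = 5 := by omega
      rcases h6 with h|h|h|h|h|h <;>
        rw [show (X+1)%6 = (X%6+1)%6 from by omega, show (X+2)%6 = (X%6+2)%6 from by omega, h] <;>
        simp [sval, tval] <;> ring
    calc r^X * tval r ((X+1)%6) + r^X * sval r ((X+1)%6)
        = r^X * (tval r ((X+1)%6) + sval r ((X+1)%6)) := by ring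
      _ = r^X * (r * tval r ((X+2)%6)) := by rw [key]
      _ = r^(X+1) * tval r ((X+2)%6) := by ring

theorem mertens_case_sqrt_q (r : ℤ) (hr : 2 ≤ r) (q a : ℤ)
    (hq : q = r ^ 2) (ha : a = r) :
    ∀ X : ℕ, 1 ≤ X →
      (X % 6 = 0 → mertM q a X = r ^ X) ∧
      (X % 6 = 1 → mertM q a X = r ^ (X - 1)) ∧
      (X % 6 = 2 → mertM q a X = -r ^ X + r ^ (X - 1)) ∧
      (X % 6 = 3 → mertM q a X = -r ^ X) ∧
      (X % 6 = 4 → mertM q a X = -r ^ (X - 1)) ∧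
      (X % 6 = 5 → mertM q a X = r ^ X - r ^ (X - 1)) ∧
      |(mertM q a X : ℝ)| ≤ (q : ℝ) ^ ((X : ℝ) / 2) ∧
      (|(mertM q a X : ℝ)| = (q : ℝ) ^ ((X : ℝ) / 2) ↔ X % 3 = 0) := by
  subst q; subst a
  intro X hX
  obtain ⟨Y, rfl⟩ : ∃ Y, X = Y + 1 := ⟨X - 1, by omega⟩
  have hM := m_eq r Y
  have hr1 : (1:ℝ) < (r:ℝ) := by exact_mod_cast (by omega : (1:ℤ) < r)
  have hr0 : (0:ℝ) < (r:ℝ) := by linarith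
  refine ⟨?_, ?_, ?_, ?_, ?_, ?_, ?_⟩
  · intro h; rw [hM, h]; simp [tval]; ring
  · intro h; rw [hM, h]; simp [tval]
  · intro h; rw [hM, h]; simp [tval]; ring
  · intro h; rw [hM, h]; simp [tval]; ring
  · intro h; rw [hM, h]; simp [tval]
  · intro h; rw [hM, h]; simp [tval]; ring
  · have hpow : ((r:ℝ)^2) ^ (((Y:ℝ)+1)/2) = (r:ℝ) ^ (Y+1 : ℕ) := by
      rw [← Real.rpow_natCast (r:ℝ) 2, ← Real.rpow_mul hr0.le,
          ← Real.rpow_natCast (r:ℝ) (Y+1)]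
      congr 1; push_cast; ring
    have hgoal : ((r:ℝ)^2) ^ (((Y:ℝ)+1)/2) = (r:ℝ)^Y * (r:ℝ) := by
      rw [hpow, pow_succ]
    have habs : |(mertM (r^2) r (Y+1) : ℝ)| = (r:ℝ)^Y * |((tval r ((Y+1)%6) : ℤ) : ℝ)| := by
      rw [hM]; push_cast; rw [abs_mul, abs_pow, abs_of_pos hr0]
    have hY0 : (0:ℝ) < (r:ℝ)^Y := by positivity
    have h6 : (Y+1) % 6 = 0 ∨ (Y+1) % 6 = 1 ∨ (Y+1) % 6 = 2 ∨ (Y+1) % 6 = 3 ∨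
        (Y+1) % 6 = 4 ∨ (Y+1) % 6 = 5 := by omega
    have key : ∀ c : ℤ, tval r ((Y+1)%6) = c →
        |(mertM (r^2) r (Y+1) : ℝ)| = (r:ℝ)^Y * |(c:ℝ)| := by
      intro c hc; rw [habs, hc]
    push_cast
    rcases h6 with h|h|h|h|h|h
    · rw [key r (by rw [h]; simp [tval]), hgoal, abs_of_pos hr0]
      exact ⟨le_rfl, ⟨fun _ => by omega, fun _ => rfl⟩⟩
    · rw [key 1 (by rw [h]; simp [tval]), hgoal]
      push_cast
      rw [abs_one]
      refine ⟨by nlinarith, ⟨fun he => by nlinarith, fun h3 => by omega⟩⟩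
    · rw [key (1 - r) (by rw [h]; simp [tval]), hgoal]
      push_cast
      rw [abs_sub_comm, abs_of_pos (by linarith : (0:ℝ) < (r:ℝ) - 1)]
      refine ⟨by nlinarith, ⟨fun he => by nlinarith, fun h3 => by omega⟩⟩
    · rw [key (-r) (by rw [h]; simp [tval])]
      push_cast
      rw [abs_neg, abs_of_pos hr0, hgoal]
      exact ⟨le_rfl, ⟨fun _ => by omega, fun _ => rfl⟩⟩
    · rw [key (-1) (by rw [h]; simp [tval]), hgoal]
      push_cast
      rw [abs_neg, abs_one]
      refine ⟨by nlinarith, ⟨fun he => by nlinarith, fun h3 => by omega⟩⟩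
    · rw [key (r - 1) (by rw [h]; simp [tval]), hgoal]
      push_cast
      rw [abs_of_pos (by linarith : (0:ℝ) < (r:ℝ) - 1)]
      refine ⟨by nlinarith, ⟨fun he => by nlinarith, fun h3 => by omega⟩⟩
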